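/- For every natural number n, the integral over the real line of ((H_{2n}(x) - H_{2n}(0))/x)^2 e^{-x^2} dx equals 2√π · (2n)! · [2^{2n} - binom(2n,n)], where H_k denotes the k-th (physicists') Hermite polynomial. -/

import Mathlib

open MeasureTheory Real

/-- The physicists' Hermite polynomials, defined by
`H_{n+1}(x) = 2x H_n(x) - 2n H_{n-1}(x)` with `H_0 = 1`, `H_1 = 2x`. -/
noncomputable def hermiteH : ℕ → ℝ → ℝ
  | 0, _ => 1
  | 1, x => 2 * x
  | n + 2, x => 2 * x * hermiteH (n + 1) x - 2 * ((n : ℝ) + 1) * hermiteH n x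

open Polynomial Filter Topology

noncomputable def PH : ℕ → Polynomial ℝ
  | 0 => 1
  | 1 => C 2 * X
  | n + 2 => C 2 * X * PH (n + 1) - C (2 * ((n : ℝ) + 1)) * PH n

theorem PH_rec (n : ℕ) :
    PH (n + 2) = C 2 * X * PH (n + 1) - C (2 * ((n : ℝ) + 1)) * PH n := rfl

theorem PH_one : PH 1 = C 2 * X := rfl

theorem PH_zero : PH 0 = 1 := rfl

theorem PH_eval : ∀ (n : ℕ) (x : ℝ), (PH n).eval x = hermiteH n x
  | 0, x => by simp [PH, hermiteH]
  | 1, x => by simp [PH, hermiteH]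
  | n + 2, x => by
      simp [PH, hermiteH, PH_eval (n + 1) x, PH_eval n x]

theorem PH_deriv : ∀ n : ℕ, derivative (PH (n + 1)) = C (2 * ((n : ℝ) + 1)) * PH n
  | 0 => by simp [PH]
  | 1 => by
      show derivative (PH 2) = _
      rw [PH_rec 0]
      simp only [PH, derivative_sub, derivative_mul, derivative_C, derivative_X, derivative_one]
      simp only [map_mul, map_add, map_ofNat, map_one, map_zero, map_natCast]
      ring
  | n + 2 => by
      have h2 := PH_deriv n
      have h1 : derivative (PH (n + 2)) = C (2 * ((n : ℝ) + 2)) * PH (n + 1) := by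
        have := PH_deriv (n + 1)
        rw [this]
        push_cast
        ring_nf
      show derivative (PH ((n + 1) + 2)) = _
      rw [PH_rec (n + 1)]
      simp only [derivative_sub, derivative_mul, derivative_C, derivative_X,
        show n + 1 + 1 = n + 2 from rfl]
      rw [h1, h2, PH_rec n]
      simp only [map_mul, map_add, map_ofNat, map_one, map_zero, map_natCast]
      push_cast
      ring

theorem integrable_pow_gauss (k : ℕ) :
    Integrable fun x : ℝ => x ^ k * Real.exp (-x ^ 2) := by
  have hk : (-1 : ℝ) < (k : ℝ) := by
    have : (0:ℝ) ≤ k := Nat.cast_nonneg k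
    linarith
  have h := integrable_rpow_mul_exp_neg_mul_sq (b := 1) one_pos (s := (k : ℝ)) hk
  simpa [Real.rpow_natCast] using h

theorem integrable_pg (p : Polynomial ℝ) :
    Integrable fun x : ℝ => p.eval x * Real.exp (-x ^ 2) := by
  induction p using Polynomial.induction_on' with
  | add p q hp hq =>
      simpa [add_mul] using hp.fun_add hq
  | monomial k a =>
      have := (integrable_pow_gauss k).const_mul a
      simpa [mul_assoc] using this

noncomputable def Phi (p : Polynomial ℝ) : ℝ := ∫ x : ℝ, p.eval x * Real.exp (-x ^ 2)

theorem Phi_zero : Phi 0 = 0 := by simp [Phi]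

theorem Phi_add (p q : Polynomial ℝ) : Phi (p + q) = Phi p + Phi q := by
  rw [Phi, Phi, Phi, ← integral_add (integrable_pg p) (integrable_pg q)]
  simp [add_mul]

theorem Phi_sub (p q : Polynomial ℝ) : Phi (p - q) = Phi p - Phi q := by
  rw [Phi, Phi, Phi, ← integral_sub (integrable_pg p) (integrable_pg q)]
  simp [sub_mul]

theorem Phi_Cmul (a : ℝ) (p : Polynomial ℝ) : Phi (C a * p) = a * Phi p := by
  rw [Phi, Phi, ← MeasureTheory.integral_const_mul]
  simp [mul_assoc]

theorem Phi_sum {ι : Type*} (s : Finset ι) (f : ι → Polynomial ℝ) :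
    Phi (∑ i ∈ s, f i) = ∑ i ∈ s, Phi (f i) := by
  classical
  induction s using Finset.induction_on with
  | empty => simp [Phi_zero]
  | insert _ _ h ih => simp [Finset.sum_insert h, Phi_add, ih]

theorem tendsto_pg_top (p : Polynomial ℝ) :
    Tendsto (fun x : ℝ => p.eval x * Real.exp (-x ^ 2)) atTop (𝓝 0) := by
  have hg : Tendsto (fun x : ℝ => |p.eval x / Real.exp x|) atTop (𝓝 0) := by
    simpa using (p.tendsto_div_exp_atTop).abs
  apply squeeze_zero_norm' _ hg
  filter_upwards [eventually_ge_atTop (1 : ℝ)] with x hx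
  have hxx : x ≤ x ^ 2 := by nlinarith
  have h1 : Real.exp (-x ^ 2) ≤ Real.exp (-x) := Real.exp_le_exp.2 (by linarith)
  have h2 : ‖p.eval x * Real.exp (-x ^ 2)‖ ≤ |p.eval x| * Real.exp (-x) := by
    rw [norm_mul, Real.norm_eq_abs, Real.norm_eq_abs, abs_of_pos (Real.exp_pos _)]
    exact mul_le_mul_of_nonneg_left h1 (abs_nonneg _)
  refine h2.trans ?_
  rw [Real.exp_neg, abs_div, abs_of_pos (Real.exp_pos _), div_eq_mul_inv]

theorem tendsto_pg_bot (p : Polynomial ℝ) :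
    Tendsto (fun x : ℝ => p.eval x * Real.exp (-x ^ 2)) atBot (𝓝 0) := by
  have h := (tendsto_pg_top (p.comp (-X))).comp tendsto_neg_atBot_atTop
  simpa [Function.comp_def, eval_comp] using h

theorem hasDerivAt_pg (p : Polynomial ℝ) (x : ℝ) :
    HasDerivAt (fun x : ℝ => p.eval x * Real.exp (-x ^ 2))
      ((derivative p - C 2 * X * p).eval x * Real.exp (-x ^ 2)) x := by
  have h2 : HasDerivAt (fun x : ℝ => Real.exp (-x ^ 2)) (Real.exp (-x ^ 2) * (-(2 * x))) x := by
    have h : HasDerivAt (fun x : ℝ => -x ^ 2) (-(2 * x)) x := by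
      simpa using (hasDerivAt_pow 2 x).fun_neg
    exact h.exp
  have := (p.hasDerivAt x).fun_mul h2
  refine this.congr_deriv ?_
  simp only [eval_sub, eval_mul, eval_C, eval_X]
  ring

theorem Phi_ibp (p : Polynomial ℝ) : Phi (derivative p) = Phi (C 2 * X * p) := by
  have key : ∫ x : ℝ, (derivative p - C 2 * X * p).eval x * Real.exp (-x ^ 2) = 0 - 0 :=
    integral_of_hasDerivAt_of_tendsto (hasDerivAt_pg p) (integrable_pg _)
      (tendsto_pg_bot p) (tendsto_pg_top p)
  have : Phi (derivative p - C 2 * X * p) = 0 := by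
    rw [Phi, key, sub_zero]
  rw [Phi_sub] at this
  linarith

theorem Phi_one : Phi 1 = Real.sqrt π := by
  have h := integral_gaussian 1
  simp only [Phi, eval_one, one_mul]
  simpa using h

-- J (j+1) 0 = 0
theorem J_succ_zero : ∀ j : ℕ, Phi (PH (j + 1)) = 0
  | 0 => by
      have h := Phi_ibp 1
      simpa [derivative_one, Phi_zero, PH_one] using h.symm
  | j + 1 => by
      have h := Phi_ibp (PH (j + 1))
      rw [PH_deriv j, Phi_Cmul] at h
      have hr : C 2 * X * PH (j + 1) = PH (j + 2) + C (2 * ((j : ℝ) + 1)) * PH j := by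
        rw [PH_rec j]; ring
      rw [hr, Phi_add, Phi_Cmul] at h
      linarith

theorem J_step (j k : ℕ) :
    Phi (PH (j + 1) * PH (k + 1)) = 2 * ((k : ℝ) + 1) * Phi (PH j * PH k) := by
  cases j with
  | zero =>
      have h := Phi_ibp (PH (k + 1))
      rw [PH_deriv k, Phi_Cmul] at h
      calc Phi (PH 1 * PH (k + 1)) = Phi (C 2 * X * PH (k + 1)) := rfl
        _ = 2 * ((k : ℝ) + 1) * Phi (PH k) := h.symm
        _ = 2 * ((k : ℝ) + 1) * Phi (PH 0 * PH k) := by rw [PH_zero, one_mul]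
  | succ j =>
      have hD : derivative (PH (j + 1) * PH (k + 1)) =
          C (2 * ((j : ℝ) + 1)) * (PH j * PH (k + 1))
            + C (2 * ((k : ℝ) + 1)) * (PH (j + 1) * PH k) := by
        rw [derivative_mul, PH_deriv j, PH_deriv k]
        ring
      have h := Phi_ibp (PH (j + 1) * PH (k + 1))
      rw [hD, Phi_add, Phi_Cmul, Phi_Cmul] at h
      have hr : C 2 * X * (PH (j + 1) * PH (k + 1)) =
          PH (j + 2) * PH (k + 1) + C (2 * ((j : ℝ) + 1)) * (PH j * PH (k + 1)) := by
        rw [PH_rec j]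
        ring
      rw [hr, Phi_add, Phi_Cmul] at h
      linarith

theorem J_eq : ∀ j k : ℕ, Phi (PH j * PH k)
    = if j = k then Real.sqrt π * 2 ^ j * (j.factorial : ℝ) else 0
  | 0, 0 => by simpa [PH_zero] using Phi_one
  | 0, k + 1 => by
      have := J_succ_zero k
      simp only [PH_zero, one_mul]
      simpa using this
  | j + 1, 0 => by
      have := J_succ_zero j
      simp only [PH_zero, mul_one]
      simpa using this
  | j + 1, k + 1 => by
      rw [J_step j k, J_eq j k]
      by_cases h : j = k
      · subst h
        simp only [if_pos rfl, Nat.factorial_succ]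
        push_cast
        ring
      · simp [h, fun hh => h (Nat.succ_injective hh)]

theorem J_diag (m : ℕ) : Phi (PH m * PH m) = Real.sqrt π * 2 ^ m * (m.factorial : ℝ) := by
  simp [J_eq m m]

theorem J_off {j k : ℕ} (h : j ≠ k) : Phi (PH j * PH k) = 0 := by
  simp [J_eq j k, h]

-- moments against PH
theorem M_step (k m : ℕ) :
    Phi (X ^ (k + 1) * PH (m + 2)) = ((k : ℝ) + 1) * Phi (X ^ k * PH (m + 1)) := by
  have hD : derivative (X ^ (k + 1) * PH (m + 1)) =
      C ((k : ℝ) + 1) * (X ^ k * PH (m + 1))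
        + C (2 * ((m : ℝ) + 1)) * (X ^ (k + 1) * PH m) := by
    rw [derivative_mul, PH_deriv m, derivative_X_pow]
    push_cast
    ring
  have h := Phi_ibp (X ^ (k + 1) * PH (m + 1))
  rw [hD, Phi_add, Phi_Cmul, Phi_Cmul] at h
  have hr : C 2 * X * (X ^ (k + 1) * PH (m + 1)) =
      X ^ (k + 1) * PH (m + 2) + C (2 * ((m : ℝ) + 1)) * (X ^ (k + 1) * PH m) := by
    rw [PH_rec m]
    ring
  rw [hr, Phi_add, Phi_Cmul] at h
  linarith

theorem M_lt : ∀ k m : ℕ, k < m → Phi (X ^ k * PH m) = 0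
  | 0, m + 1, _ => by
      have := J_succ_zero m
      simpa using this
  | k + 1, m + 2, h => by
      rw [M_step k m, M_lt k (m + 1) (by omega), mul_zero]

theorem orth_low (r : Polynomial ℝ) (m : ℕ) (h : r.degree < m) : Phi (r * PH m) = 0 := by
  conv_lhs => rw [r.as_sum_support_C_mul_X_pow, Finset.sum_mul]
  rw [Phi_sum]
  apply Finset.sum_eq_zero
  intro k hk
  have hkm : k < m := by
    have := Polynomial.le_degree_of_ne_zero (Polynomial.mem_support_iff.mp hk)
    have := this.trans_lt h
    exact_mod_cast this
  rw [mul_assoc, Phi_Cmul, M_lt k m hkm, mul_zero]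

theorem PH_natDegree_le : ∀ n : ℕ, (PH n).natDegree ≤ n
  | 0 => by simp [PH_zero]
  | 1 => by
      refine (natDegree_mul_le).trans ?_
      simp [natDegree_C, natDegree_X_le]
  | n + 2 => by
      rw [PH_rec n]
      refine (natDegree_sub_le _ _).trans ?_
      have h1 : (C (2:ℝ) * X * PH (n + 1)).natDegree ≤ n + 2 := by
        refine (natDegree_mul_le).trans ?_
        have : (C (2:ℝ) * X).natDegree ≤ 1 := by
          refine (natDegree_mul_le).trans ?_
          simp [natDegree_C, natDegree_X_le]
        have := PH_natDegree_le (n + 1)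
        omega
      have h2 : (C (2 * ((n:ℝ) + 1)) * PH n).natDegree ≤ n + 2 := by
        refine (natDegree_mul_le).trans ?_
        rw [natDegree_C]
        have := PH_natDegree_le n
        omega
      omega

theorem PH_coeff_self : ∀ n : ℕ, (PH n).coeff n = 2 ^ n
  | 0 => by simp [PH_zero]
  | 1 => by simp [PH_one, coeff_C_mul]
  | n + 2 => by
      rw [PH_rec n, coeff_sub, mul_assoc, coeff_C_mul, coeff_C_mul]
      rw [show n + 2 = (n + 1) + 1 from rfl, coeff_X_mul, PH_coeff_self (n + 1)]
      have : (PH n).coeff (n + 1 + 1) = 0 :=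
        coeff_eq_zero_of_natDegree_lt (by have := PH_natDegree_le n; omega)
      rw [this]
      ring

theorem PH_coeff_gt {n k : ℕ} (h : n < k) : (PH n).coeff k = 0 :=
  coeff_eq_zero_of_natDegree_lt ((PH_natDegree_le n).trans_lt (by exact_mod_cast h))

noncomputable def QH (n : ℕ) : Polynomial ℝ :=
  (PH (2 * n) - C ((PH (2 * n)).eval 0)).divX

theorem XQ (n : ℕ) : X * QH n = PH (2 * n) - C ((PH (2 * n)).eval 0) := by
  have h := (PH (2 * n) - C ((PH (2 * n)).eval 0)).X_mul_divX_add
  have hc : (PH (2 * n) - C ((PH (2 * n)).eval 0)).coeff 0 = 0 := by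
    rw [coeff_sub, coeff_C, coeff_zero_eq_eval_zero]
    simp
  rw [hc, map_zero, add_zero] at h
  exact h

theorem QH_coeff (n k : ℕ) : (QH n).coeff k = (PH (2 * n) - C ((PH (2 * n)).eval 0)).coeff (k + 1) := by
  simp [QH, coeff_divX]

theorem QH_coeff' (n : ℕ) (k : ℕ) : (QH n).coeff k = (PH (2 * n)).coeff (k + 1) := by
  rw [QH_coeff, coeff_sub, coeff_C]
  simp

theorem QH_zero : QH 0 = 0 := by
  have h : PH (2 * 0) - C ((PH (2 * 0)).eval 0) = 0 := by
    norm_num [PH_zero]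
  rw [QH, h, divX_zero]

-- Step recurrence pieces for n = m+1
theorem Q_rec (m : ℕ) :
    QH (m + 2) = C 4 * X * PH (2 * m + 2) - C (8 * ((m : ℝ) + 1)) * PH (2 * m + 1)
      - C (4 * (m : ℝ) + 6) * QH (m + 1) := by
  set c1 : ℝ := (PH (2 * m + 2)).eval 0 with hc1def
  have hXQ1 : X * QH (m + 1) = PH (2 * m + 2) - C c1 := by
    have := XQ (m + 1)
    rwa [show 2 * (m + 1) = 2 * m + 2 by ring] at this
  have hXQ2 : X * QH (m + 2) = PH (2 * m + 4) - C ((PH (2 * m + 4)).eval 0) := by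
    have := XQ (m + 2)
    rwa [show 2 * (m + 2) = 2 * m + 4 by ring] at this
  have h1' : PH (2 * m + 4) = 2 * X * PH (2 * m + 3) - (4 * (m : Polynomial ℝ) + 6) * PH (2 * m + 2) := by
    have h := PH_rec (2 * m + 2)
    rw [show 2 * m + 2 + 2 = 2 * m + 4 by ring, show 2 * m + 2 + 1 = 2 * m + 3 by ring] at h
    rw [h]
    simp only [map_mul, map_add, map_ofNat, map_natCast, map_one]
    push_cast
    ring
  have h2' : PH (2 * m + 3) = 2 * X * PH (2 * m + 2) - (4 * (m : Polynomial ℝ) + 4) * PH (2 * m + 1) := by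
    have h := PH_rec (2 * m + 1)
    rw [show 2 * m + 1 + 2 = 2 * m + 3 by ring, show 2 * m + 1 + 1 = 2 * m + 2 by ring] at h
    rw [h]
    simp only [map_mul, map_add, map_ofNat, map_natCast, map_one]
    push_cast
    ring
  have hc2' : C ((PH (2 * m + 4)).eval 0) = -(4 * (m : Polynomial ℝ) + 6) * C c1 := by
    have : (PH (2 * m + 4)).eval 0 = -(4 * (m : ℝ) + 6) * c1 := by
      rw [h1', h2']
      simp only [eval_sub, eval_mul, eval_add, eval_ofNat, eval_natCast, eval_X]
      ring
    rw [this]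
    simp only [map_mul, map_neg, map_add, map_ofNat, map_natCast]
  apply mul_left_cancel₀ (Polynomial.X_ne_zero (R := ℝ))
  rw [hXQ2, hc2']
  have hgoal : PH (2 * m + 4) + (4 * (m : Polynomial ℝ) + 6) * C c1
      = X * (C 4 * X * PH (2 * m + 2) - C (8 * ((m : ℝ) + 1)) * PH (2 * m + 1)
        - C (4 * (m : ℝ) + 6) * QH (m + 1)) := by
    simp only [map_mul, map_add, map_ofNat, map_natCast, map_one]
    linear_combination h1' + (2 * X) * h2' + (4 * (m : Polynomial ℝ) + 6) * hXQ1
  linear_combination hgoal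

theorem I_val (n : ℕ) : Phi (QH n * QH n)
    = 2 * Real.sqrt π * ((2 * n).factorial : ℝ) * (2 ^ (2 * n) - ((2 * n).choose n : ℝ)) := by
  induction n with
  | zero => simp [QH_zero, Phi_zero]
  | succ n ih =>
    match n, ih with
    | 0, _ =>
      -- QH 1 = C 4 * X
      have hq : QH 1 = C 4 * X := by
        apply mul_left_cancel₀ (Polynomial.X_ne_zero (R := ℝ))
        rw [XQ 1]
        have : PH (2 * 1) = C 2 * X * (C 2 * X) - C 2 * 1 := by
          rw [show 2 * 1 = 0 + 2 by ring, PH_rec 0, PH_one, PH_zero]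
          norm_num
        rw [this]
        simp only [eval_sub, eval_mul, eval_one, eval_C, eval_X]
        norm_num
        simp only [map_mul, map_sub, map_ofNat, map_one, map_neg]
        ring
      have hkey : QH 1 * QH 1 = C 4 * (PH 1 * PH 1) := by
        rw [hq, PH_one]
        simp only [map_mul, map_ofNat]
        ring
      rw [hkey, Phi_Cmul, J_diag 1]
      norm_num
      ring
    | m + 1, ih =>
      set s := Real.sqrt π
      set F1 : ℝ := ((2 * m + 1).factorial : ℝ) with hF1
      have hJb : Phi (PH (2 * m + 1) * PH (2 * m + 1)) = s * 2 ^ (2 * m + 1) * F1 := J_diag _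
      have hJa : Phi (PH (2 * m + 2) * PH (2 * m + 2))
          = s * 2 ^ (2 * m + 2) * ((2 * m + 2).factorial : ℝ) := J_diag _
      have hJ3 : Phi (PH (2 * m + 3) * PH (2 * m + 3))
          = s * 2 ^ (2 * m + 3) * ((2 * m + 3).factorial : ℝ) := J_diag _
      set c1 : ℝ := (PH (2 * m + 2)).eval 0 with hc1def
      have hXQ1 : X * QH (m + 1) = PH (2 * m + 2) - C c1 := by
        have := XQ (m + 1)
        rwa [show 2 * (m + 1) = 2 * m + 2 by ring] at this
      have h2' : PH (2 * m + 3) = 2 * X * PH (2 * m + 2) - (4 * (m : Polynomial ℝ) + 4) * PH (2 * m + 1) := by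
        have h := PH_rec (2 * m + 1)
        rw [show 2 * m + 1 + 2 = 2 * m + 3 by ring, show 2 * m + 1 + 1 = 2 * m + 2 by ring] at h
        rw [h]
        simp only [map_mul, map_add, map_ofNat, map_natCast, map_one]
        push_cast
        ring
      -- (i) Phi (X*X*(A*A))
      have hA : Phi (X * X * (PH (2 * m + 2) * PH (2 * m + 2)))
          = (s * 2 ^ (2 * m + 3) * ((2 * m + 3).factorial : ℝ)
            + (4 * (m : ℝ) + 4) ^ 2 * (s * 2 ^ (2 * m + 1) * F1)) / 4 := by
        have e1 : C (4:ℝ) * (X * X * (PH (2 * m + 2) * PH (2 * m + 2)))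
            = PH (2 * m + 3) * PH (2 * m + 3)
              + C (8 * (m : ℝ) + 8) * (PH (2 * m + 3) * PH (2 * m + 1))
              + C ((4 * (m : ℝ) + 4) ^ 2) * (PH (2 * m + 1) * PH (2 * m + 1)) := by
          simp only [map_mul, map_add, map_ofNat, map_natCast, map_pow, map_one]
          linear_combination (-(2 * X * PH (2*m+2) + PH (2*m+3) + (4*(m : Polynomial ℝ)+4) * PH (2*m+1))) * h2'
        have := congrArg Phi e1
        rw [Phi_Cmul, Phi_add, Phi_add, Phi_Cmul, Phi_Cmul, hJ3, hJb,
          J_off (by omega : 2 * m + 3 ≠ 2 * m + 1)] at this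
        linarith
      -- (ii) Phi (X*(A*B))
      have hAB : Phi (X * (PH (2 * m + 2) * PH (2 * m + 1)))
          = ((4 * (m : ℝ) + 4) * (s * 2 ^ (2 * m + 1) * F1)) / 2 := by
        have e2 : C (2:ℝ) * (X * (PH (2 * m + 2) * PH (2 * m + 1)))
            = PH (2 * m + 3) * PH (2 * m + 1)
              + C (4 * (m : ℝ) + 4) * (PH (2 * m + 1) * PH (2 * m + 1)) := by
          simp only [map_mul, map_add, map_ofNat, map_natCast, map_one]
          linear_combination (-PH (2*m+1)) * h2'
        have := congrArg Phi e2
        rw [Phi_Cmul, Phi_add, Phi_Cmul, hJb,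
          J_off (by omega : 2 * m + 3 ≠ 2 * m + 1)] at this
        linarith
      -- (iii) Phi (X*(A*Q))
      have hAQ : Phi (X * (PH (2 * m + 2) * QH (m + 1)))
          = s * 2 ^ (2 * m + 2) * ((2 * m + 2).factorial : ℝ) := by
        have e3 : X * (PH (2 * m + 2) * QH (m + 1))
            = PH (2 * m + 2) * PH (2 * m + 2) - C c1 * PH (2 * m + 2) := by
          linear_combination (PH (2 * m + 2)) * hXQ1
        have := congrArg Phi e3
        rw [Phi_sub, Phi_Cmul, hJa] at this
        have hz : Phi (PH (2 * m + 2)) = 0 := by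
          have := J_succ_zero (2 * m + 1)
          rwa [show 2 * m + 1 + 1 = 2 * m + 2 by ring] at this
        rw [hz, mul_zero, sub_zero] at this
        exact this
      -- (iv) Phi (B*Q)
      have hBQ : Phi (PH (2 * m + 1) * QH (m + 1)) = 2 * (s * 2 ^ (2 * m + 1) * F1) := by
        set r : Polynomial ℝ := QH (m + 1) - C 2 * PH (2 * m + 1) with hr
        have hdeg : r.degree < (2 * m + 1 : ℕ) := by
          rw [degree_lt_iff_coeff_zero]
          intro k hk
          have hk' : 2 * m + 1 ≤ k := by exact_mod_cast hk
          have hQc : (QH (m + 1)).coeff k = (PH (2 * m + 2)).coeff (k + 1) := by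
            have := QH_coeff' (m + 1) k
            rwa [show 2 * (m + 1) = 2 * m + 2 by ring] at this
          rcases eq_or_lt_of_le hk' with hkk | hkk
          · rw [hr, coeff_sub, coeff_C_mul, hQc, ← hkk,
              show 2 * m + 1 + 1 = 2 * m + 2 by ring, PH_coeff_self (2 * m + 2),
              PH_coeff_self (2 * m + 1)]
            ring
          · rw [hr, coeff_sub, coeff_C_mul, hQc, PH_coeff_gt (by omega : 2 * m + 2 < k + 1),
              PH_coeff_gt (by omega : 2 * m + 1 < k)]
            ring
        have e4 : PH (2 * m + 1) * QH (m + 1)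
            = r * PH (2 * m + 1) + C 2 * (PH (2 * m + 1) * PH (2 * m + 1)) := by
          rw [hr]; ring
        rw [e4, Phi_add, Phi_Cmul, orth_low r (2 * m + 1) hdeg, hJb]
        ring
      -- expansion
      have hexp : QH (m + 2) * QH (m + 2)
          = C 16 * (X * X * (PH (2 * m + 2) * PH (2 * m + 2)))
            + C (64 * ((m : ℝ) + 1) ^ 2) * (PH (2 * m + 1) * PH (2 * m + 1))
            + C ((4 * (m : ℝ) + 6) ^ 2) * (QH (m + 1) * QH (m + 1))
            - C (64 * ((m : ℝ) + 1)) * (X * (PH (2 * m + 2) * PH (2 * m + 1)))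
            - C (8 * (4 * (m : ℝ) + 6)) * (X * (PH (2 * m + 2) * QH (m + 1)))
            + C (16 * ((m : ℝ) + 1) * (4 * (m : ℝ) + 6)) * (PH (2 * m + 1) * QH (m + 1)) := by
        rw [Q_rec m]
        simp only [map_mul, map_add, map_ofNat, map_natCast, map_pow, map_one]
        ring
      rw [show 2 * (m + 1 + 1) = 2 * m + 4 by ring]
      rw [hexp, Phi_add, Phi_sub, Phi_sub, Phi_add, Phi_add,
        Phi_Cmul, Phi_Cmul, Phi_Cmul, Phi_Cmul, Phi_Cmul, Phi_Cmul,
        hA, hAB, hAQ, hBQ, hJb, ih]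
      -- arithmetic
      have hch : ((m : ℝ) + 2) * ((2 * m + 4).choose (m + 2) : ℝ)
          = 2 * (2 * (m : ℝ) + 3) * ((2 * m + 2).choose (m + 1) : ℝ) := by
        have h := Nat.succ_mul_centralBinom_succ (m + 1)
        rw [Nat.centralBinom_eq_two_mul_choose, Nat.centralBinom_eq_two_mul_choose] at h
        have h' : (m + 2) * ((2 * m + 4).choose (m + 2)) = (2 * (2 * m + 3)) * ((2 * m + 2).choose (m + 1)) := by
          convert h using 2 <;> ring_nf
        exact_mod_cast h'
      have hf2 : ((2 * m + 2).factorial : ℝ) = (2 * (m : ℝ) + 2) * F1 := by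
        rw [show 2 * m + 2 = (2 * m + 1) + 1 by ring, Nat.factorial_succ, hF1]
        push_cast; ring
      have hf3 : ((2 * m + 3).factorial : ℝ) = (2 * (m : ℝ) + 3) * (2 * (m : ℝ) + 2) * F1 := by
        rw [show 2 * m + 3 = (2 * m + 2) + 1 by ring, Nat.factorial_succ, Nat.cast_mul, hf2]
        push_cast; ring
      have hf4 : ((2 * m + 4).factorial : ℝ)
          = (2 * (m : ℝ) + 4) * (2 * (m : ℝ) + 3) * (2 * (m : ℝ) + 2) * F1 := by
        rw [show 2 * m + 4 = (2 * m + 3) + 1 by ring, Nat.factorial_succ, Nat.cast_mul, hf3]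
        push_cast; ring
      have hp : ∀ k : ℕ, (2 : ℝ) ^ (2 * m + k) = 4 ^ m * 2 ^ k := by
        intro k
        rw [pow_add, pow_mul]
        norm_num
      rw [show m + 1 + 1 = m + 2 from rfl, show 2 * (m + 1) = 2 * m + 2 by ring]
      rw [hf4, hf3, hf2, hp 1, hp 2, hp 3, hp 4]
      linear_combination (8 * s * F1 * ((m : ℝ) + 1) * (2 * (m : ℝ) + 3)) * hch

theorem hermite_even_filter_integral (n : ℕ) :
    ∫ x : ℝ, ((hermiteH (2 * n) x - hermiteH (2 * n) 0) / x) ^ 2 * Real.exp (-x ^ 2)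
      = 2 * Real.sqrt π * ((2 * n).factorial : ℝ) * (2 ^ (2 * n) - ((2 * n).choose n : ℝ)) := by
  have hae : (fun x : ℝ => ((hermiteH (2 * n) x - hermiteH (2 * n) 0) / x) ^ 2 * Real.exp (-x ^ 2))
      =ᵐ[volume] fun x : ℝ => (QH n * QH n).eval x * Real.exp (-x ^ 2) := by
    have hmem : {x : ℝ | x ≠ 0} ∈ ae (volume : Measure ℝ) := by
      rw [mem_ae_iff]
      have : {x : ℝ | x ≠ 0}ᶜ = {(0 : ℝ)} := by
        ext x; simp [not_not]
      rw [this]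
      exact Real.volume_singleton
    filter_upwards [hmem] with x hx
    have hx0 : x ≠ 0 := hx
    have hq : (QH n).eval x = (hermiteH (2 * n) x - hermiteH (2 * n) 0) / x := by
      have := congrArg (Polynomial.eval x) (XQ n)
      simp only [eval_mul, eval_X, eval_sub, eval_C] at this
      rw [PH_eval, PH_eval] at this
      field_simp
      linarith
    rw [eval_mul, hq]
    ring
  rw [integral_congr_ae hae]
  exact I_val n
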